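/- Let Le > 0 with Le ≠ 1, Pr > 0, α > 0, σ_c = (π² + α²)³/α², and let R, R̃ satisfy R − R̃/Le = σ_c. If K = sign(1 − Le)·[ (Le²/(1−Le))(1 + 1/Pr)σ_c − R̃ ] > 0, then the dispersion cubic with n = 1, β³ + b₂β² + b₁β + b₀, has 0 as a simple root and its other two complex roots both have strictly negative real parts. -/

import Mathlib

open Real Complex

/-- The constant coefficient `b₀` of the dispersion cubic. -/
noncomputable def dispB0 (Le Pr R Rt α2 : ℝ) (n : ℕ) : ℝ :=
  ((n : ℝ) ^ 2 * Real.pi ^ 2 + α2) ^ 3 * Le * Pr - α2 * Pr * (Le * R - Rt)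

/-- The linear coefficient `b₁` of the dispersion cubic. -/
noncomputable def dispB1 (Le Pr R Rt α2 : ℝ) (n : ℕ) : ℝ :=
  ((n : ℝ) ^ 2 * Real.pi ^ 2 + α2) ^ 2 * (Le + Pr + Le * Pr) -
    α2 * ((n : ℝ) ^ 2 * Real.pi ^ 2 + α2)⁻¹ * Pr * (R - Rt)

/-- The quadratic coefficient `b₂` of the dispersion cubic. -/
noncomputable def dispB2 (Le Pr α2 : ℝ) (n : ℕ) : ℝ :=
  ((n : ℝ) ^ 2 * Real.pi ^ 2 + α2) * (1 + Le + Pr)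

/-- The parameter `K` distinguishing steady from oscillatory convection. -/
noncomputable def Kparam (Le Pr Rt σc : ℝ) : ℝ :=
  Real.sign (1 - Le) * (Le ^ 2 / (1 - Le) * (1 + 1 / Pr) * σc - Rt)

lemma cubic_fact (b2 b1 z₁ z₂ : ℂ) (h1 : z₁ + z₂ = -b2) (h2 : z₁ * z₂ = b1) (z : ℂ) :
    z ^ 3 + b2 * z ^ 2 + b1 * z + 0 = z * (z - z₁) * (z - z₂) := by
  linear_combination z ^ 2 * h1 - z * h2

lemma quad_neg_roots (b1 b2 : ℝ) (hb1 : 0 < b1) (hb2 : 0 < b2) :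
    ∃ z₁ z₂ : ℂ, z₁ ≠ 0 ∧ z₂ ≠ 0 ∧ z₁.re < 0 ∧ z₂.re < 0 ∧
      ∀ z : ℂ, z ^ 3 + (b2 : ℂ) * z ^ 2 + (b1 : ℂ) * z + 0 = z * (z - z₁) * (z - z₂) := by
  rcases le_or_gt 0 (b2 ^ 2 - 4 * b1) with hd | hd
  · set s : ℝ := Real.sqrt (b2 ^ 2 - 4 * b1) with hsdef
    have hs2 : s ^ 2 = b2 ^ 2 - 4 * b1 := Real.sq_sqrt hd
    have hsnn : 0 ≤ s := Real.sqrt_nonneg _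
    have hslt : s < b2 := by nlinarith
    refine ⟨(((-b2 + s) / 2 : ℝ) : ℂ), (((-b2 - s) / 2 : ℝ) : ℂ), ?_, ?_, ?_, ?_, ?_⟩
    · simp only [ne_eq, Complex.ofReal_eq_zero]; intro h; nlinarith
    · simp only [ne_eq, Complex.ofReal_eq_zero]; intro h; nlinarith
    · simp only [Complex.ofReal_re]; nlinarith
    · simp only [Complex.ofReal_re]; nlinarith
    · intro z
      apply cubic_fact
      · push_cast; ring
      · push_cast
        have h1 : ((-b2 + s : ℂ) / 2) * ((-b2 - s) / 2) = ((b2:ℂ) ^ 2 - (s:ℂ) ^ 2) / 4 := by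
          ring
        have h2 : ((s:ℂ)) ^ 2 = (b2:ℂ) ^ 2 - 4 * (b1:ℂ) := by
          rw [← Complex.ofReal_pow, hs2]; push_cast; ring
        rw [h1, h2]; ring
  · set t : ℝ := Real.sqrt (4 * b1 - b2 ^ 2) with htdef
    have ht2 : t ^ 2 = 4 * b1 - b2 ^ 2 := Real.sq_sqrt (by linarith)
    refine ⟨(-b2 / 2 : ℝ) + (t / 2 : ℝ) * Complex.I, (-b2 / 2 : ℝ) - (t / 2 : ℝ) * Complex.I,
        ?_, ?_, ?_, ?_, ?_⟩
    · intro h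
      have := congrArg Complex.re h
      simp at this; linarith
    · intro h
      have := congrArg Complex.re h
      simp at this; linarith
    · simp only [Complex.add_re, Complex.sub_re, Complex.ofReal_re, Complex.mul_re,
        Complex.I_re, Complex.I_im, Complex.ofReal_im, mul_zero, mul_one, zero_mul, sub_zero,
        add_zero, zero_sub]
      ring_nf
      linarith
    · simp only [Complex.add_re, Complex.sub_re, Complex.ofReal_re, Complex.mul_re,
        Complex.I_re, Complex.I_im, Complex.ofReal_im, mul_zero, mul_one, zero_mul, sub_zero,
        add_zero, zero_sub]
      ring_nf
      linarith
    · intro z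
      apply cubic_fact
      · push_cast; ring
      · have hI : Complex.I ^ 2 = -1 := Complex.I_sq
        have h1 : ((-b2 / 2 : ℝ) + (t / 2 : ℝ) * Complex.I) *
            ((-b2 / 2 : ℝ) - (t / 2 : ℝ) * Complex.I)
            = ((b2:ℂ) ^ 2 / 4 + (t:ℂ) ^ 2 / 4) := by
          push_cast
          linear_combination (-((t:ℂ) ^ 2 / 4)) * hI
        have h2 : ((t:ℂ)) ^ 2 = 4 * (b1:ℂ) - (b2:ℂ) ^ 2 := by
          rw [← Complex.ofReal_pow, ht2]; push_cast; ring
        rw [h1, h2]; ring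


/-- At criticality `R − R̃/Le = σ_c = (π² + α²)³/α²`, if `K > 0` then the dispersion
cubic with `n = 1` has `0` as a simple root and its other two (complex) roots both have
strictly negative real parts. -/
theorem dispersion_roots_at_criticality (Le Pr R Rt α : ℝ) (hLe : 0 < Le) (hLe1 : Le ≠ 1)
    (hPr : 0 < Pr) (hα : 0 < α) (σc : ℝ) (hσc : σc = (Real.pi ^ 2 + α ^ 2) ^ 3 / α ^ 2)
    (hcrit : R - Rt / Le = σc) (hK : 0 < Kparam Le Pr Rt σc) :
    ∃ z₁ z₂ : ℂ, z₁ ≠ 0 ∧ z₂ ≠ 0 ∧ z₁.re < 0 ∧ z₂.re < 0 ∧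
      ∀ z : ℂ,
        z ^ 3 + (dispB2 Le Pr (α ^ 2) 1 : ℂ) * z ^ 2 + (dispB1 Le Pr R Rt (α ^ 2) 1 : ℂ) * z +
            (dispB0 Le Pr R Rt (α ^ 2) 1 : ℂ) =
          z * (z - z₁) * (z - z₂) := by
  have hα2 : (0:ℝ) < α ^ 2 := by positivity
  have hMpos : (0:ℝ) < Real.pi ^ 2 + α ^ 2 := by positivity
  have hMne : Real.pi ^ 2 + α ^ 2 ≠ 0 := ne_of_gt hMpos
  have hR : R = σc + Rt / Le := by linarith
  have hb0 : dispB0 Le Pr R Rt (α ^ 2) 1 = 0 := by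
    unfold dispB0
    rw [hR, hσc]
    field_simp
    ring
  have hkey : (1 - Le) * Rt < Le ^ 2 * (1 + 1 / Pr) * σc := by
    unfold Kparam at hK
    rcases lt_or_gt_of_ne hLe1 with h | h
    · have hs : Real.sign (1 - Le) = 1 := Real.sign_of_pos (by linarith)
      rw [hs, one_mul] at hK
      have h1 : Rt < Le ^ 2 / (1 - Le) * (1 + 1 / Pr) * σc := by linarith
      have h2 : (0:ℝ) < 1 - Le := by linarith
      rw [div_mul_eq_mul_div, div_mul_eq_mul_div, lt_div_iff₀ h2] at h1
      nlinarith [h1]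
    · have hs : Real.sign (1 - Le) = -1 := Real.sign_of_neg (by linarith)
      rw [hs] at hK
      have h1 : Le ^ 2 / (1 - Le) * (1 + 1 / Pr) * σc < Rt := by nlinarith
      have h2 : 1 - Le < 0 := by linarith
      rw [div_mul_eq_mul_div, div_mul_eq_mul_div, div_lt_iff_of_neg h2] at h1
      nlinarith [h1]
  have hb1id : dispB1 Le Pr R Rt (α ^ 2) 1 * (Le * (Real.pi ^ 2 + α ^ 2)) =
      Le ^ 2 * (1 + Pr) * (Real.pi ^ 2 + α ^ 2) ^ 3 - α ^ 2 * Pr * ((1 - Le) * Rt) := by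
    unfold dispB1
    rw [hR, hσc]
    push_cast
    field_simp
    ring
  have hασ : α ^ 2 * σc = (Real.pi ^ 2 + α ^ 2) ^ 3 := by rw [hσc]; field_simp
  have hRHS : 0 < Le ^ 2 * (1 + Pr) * (Real.pi ^ 2 + α ^ 2) ^ 3 -
      α ^ 2 * Pr * ((1 - Le) * Rt) := by
    have h3 : α ^ 2 * Pr * ((1 - Le) * Rt) < α ^ 2 * Pr * (Le ^ 2 * (1 + 1 / Pr) * σc) :=
      (mul_lt_mul_iff_right₀ (mul_pos hα2 hPr)).2 hkey
    have h4 : α ^ 2 * Pr * (Le ^ 2 * (1 + 1 / Pr) * σc) =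
        Le ^ 2 * (1 + Pr) * (Real.pi ^ 2 + α ^ 2) ^ 3 := by
      field_simp
      linear_combination (1 + Pr) * hασ
    rw [h4] at h3
    linarith
  have hLM : (0:ℝ) < Le * (Real.pi ^ 2 + α ^ 2) := mul_pos hLe hMpos
  have hb1 : 0 < dispB1 Le Pr R Rt (α ^ 2) 1 := by nlinarith [hb1id, hRHS, hLM]
  have hb2 : 0 < dispB2 Le Pr (α ^ 2) 1 := by
    unfold dispB2
    push_cast
    nlinarith [hMpos, hLe, hPr]
  have := quad_neg_roots (dispB1 Le Pr R Rt (α ^ 2) 1) (dispB2 Le Pr (α ^ 2) 1) hb1 hb2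
  obtain ⟨z₁, z₂, h1, h2, h3, h4, h5⟩ := this
  refine ⟨z₁, z₂, h1, h2, h3, h4, fun z => ?_⟩
  rw [hb0]
  simpa using h5 z
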